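/- The product over all primes p of (p^2 + 1)/(p^2 - 1) equals 5/2. -/
import Mathlib

open Real Filter

private noncomputable def powInvHom (k : ℕ) (hk : k ≠ 0) : ℕ →*₀ ℝ where
  toFun n := (((n : ℝ)) ^ k)⁻¹
  map_zero' := by simp [zero_pow hk]
  map_one' := by norm_num
  map_mul' m n := by push_cast [mul_pow, mul_inv]; ring

private lemma hasProd_euler (k : ℕ) (hk : 1 < k) :
    HasProd (fun p : Nat.Primes ↦ (1 - (((p : ℕ) : ℝ) ^ k)⁻¹)⁻¹)
      (∑' n : ℕ, (((n : ℝ)) ^ k)⁻¹) := by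
  have hsum : Summable (fun n : ℕ ↦ ‖powInvHom k (by omega) n‖) := by
    have := summable_one_div_nat_pow.mpr hk
    refine this.congr fun n ↦ ?_
    simp [powInvHom, abs_of_nonneg, one_div]
  simpa [powInvHom] using EulerProduct.eulerProduct_completely_multiplicative_hasProd hsum

theorem prod_primes_sq_add_one_div_sq_sub_one :
    ∏' p : Nat.Primes, (((p : ℕ) : ℝ) ^ 2 + 1) / (((p : ℕ) : ℝ) ^ 2 - 1) = 5 / 2 := by
  have h2 : HasProd (fun p : Nat.Primes ↦ (1 - (((p : ℕ) : ℝ) ^ 2)⁻¹)⁻¹) (π ^ 2 / 6) := by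
    have := hasProd_euler 2 (by norm_num)
    rwa [show (∑' n : ℕ, (((n : ℝ)) ^ 2)⁻¹) = π ^ 2 / 6 by
      rw [← hasSum_zeta_two.tsum_eq]; simp [one_div]] at this
  have h4 : HasProd (fun p : Nat.Primes ↦ (1 - (((p : ℕ) : ℝ) ^ 4)⁻¹)⁻¹) (π ^ 4 / 90) := by
    have := hasProd_euler 4 (by norm_num)
    rwa [show (∑' n : ℕ, (((n : ℝ)) ^ 4)⁻¹) = π ^ 4 / 90 by
      rw [← hasSum_zeta_four.tsum_eq]; simp [one_div]] at this
  have hπ : (π : ℝ) ≠ 0 := Real.pi_ne_zero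
  have hmul := h2.mul h2
  have h90 : (π ^ 4 / 90 : ℝ) ≠ 0 := by positivity
  have hpt : ∀ p : Nat.Primes,
      (((p : ℕ) : ℝ) ^ 2 + 1) / (((p : ℕ) : ℝ) ^ 2 - 1) =
        ((1 - (((p : ℕ) : ℝ) ^ 2)⁻¹)⁻¹ * (1 - (((p : ℕ) : ℝ) ^ 2)⁻¹)⁻¹) /
          (1 - (((p : ℕ) : ℝ) ^ 4)⁻¹)⁻¹ := by
    intro p
    have hq : (2 : ℝ) ≤ ((p : ℕ) : ℝ) := by exact_mod_cast p.prop.two_le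
    set q : ℝ := ((p : ℕ) : ℝ) with hqdef
    have h0 : q ≠ 0 := by nlinarith
    have h1 : q ^ 2 - 1 ≠ 0 := by nlinarith
    have h2 : q ^ 4 - 1 ≠ 0 := by nlinarith [sq_nonneg (q^2), sq_nonneg q, sq_nonneg (q^2-1)]
    have e1 : (1 - (q ^ 2)⁻¹) = (q ^ 2 - 1) / q ^ 2 := by field_simp
    have e2 : (1 - (q ^ 4)⁻¹) = (q ^ 4 - 1) / q ^ 4 := by field_simp
    rw [e1, e2]
    field_simp
    ring
  have key : HasProd
      (fun p : Nat.Primes ↦ (((p : ℕ) : ℝ) ^ 2 + 1) / (((p : ℕ) : ℝ) ^ 2 - 1)) (5 / 2) := by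
    have hfun : (fun s : Finset Nat.Primes ↦
        ∏ p ∈ s, (((p : ℕ) : ℝ) ^ 2 + 1) / (((p : ℕ) : ℝ) ^ 2 - 1)) =
        fun s : Finset Nat.Primes ↦ (∏ p ∈ s, ((1 - (((p : ℕ) : ℝ) ^ 2)⁻¹)⁻¹ * (1 - (((p : ℕ) : ℝ) ^ 2)⁻¹)⁻¹)) /
          ∏ p ∈ s, (1 - (((p : ℕ) : ℝ) ^ 4)⁻¹)⁻¹ := by
      funext s
      rw [← Finset.prod_div_distrib]
      exact Finset.prod_congr rfl fun p _ ↦ hpt p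
    have hlim : (5 / 2 : ℝ) = π ^ 2 / 6 * (π ^ 2 / 6) / (π ^ 4 / 90) := by
      field_simp
      ring
    rw [HasProd, hfun, hlim]
    exact Filter.Tendsto.div hmul h4 h90
  exact key.tprod_eq
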